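/- Assume the PACA setting with the Slater condition, and suppose the PACA sequence (xᵏ) is infinite (xᵏ ∉ C for all k). Then (xᵏ) converges to some point x* ∈ C, i.e. there exists x* with fᵢ(x*) ≤ 0 for all i such that xᵏ → x*. -/

import Mathlib

open Filter
open scoped RealInnerProductSpace

-- single-step Fejér lemma
lemma paca_fejer_step {n m : ℕ} (hm : 0 < m)
    (f : Fin m → EuclideanSpace ℝ (Fin n) → ℝ)
    (x xnext : EuclideanSpace ℝ (Fin n)) (ε : ℝ)
    (u v : Fin m → EuclideanSpace ℝ (Fin n)) (w : EuclideanSpace ℝ (Fin n))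
    (hsub : ∀ i z, f i x + ⟪u i, z - x⟫ ≤ f i z)
    (hune : ∀ i, 0 < f i x + ε → u i ≠ 0)
    (hv : ∀ i, v i = (max 0 (f i x + ε) / ‖u i‖ ^ 2) • u i)
    (hw : w = (m : ℝ)⁻¹ • ∑ i, v i)
    (hstep0 : w = 0 → xnext = x)
    (hstep : w ≠ 0 → xnext = x - (((m : ℝ)⁻¹ * ∑ i, ‖v i‖ ^ 2) / ‖w‖ ^ 2) • w)
    (z : EuclideanSpace ℝ (Fin n)) (hz : ∀ i, f i z + ε ≤ 0) :
    ‖xnext - z‖ ^ 2 + (m : ℝ)⁻¹ * ∑ i, ‖v i‖ ^ 2 ≤ ‖x - z‖ ^ 2 := by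
  set S : ℝ := (m : ℝ)⁻¹ * ∑ i, ‖v i‖ ^ 2 with hS
  have hSnn : 0 ≤ S := by
    apply mul_nonneg (by positivity)
    exact Finset.sum_nonneg fun i _ => by positivity
  -- each v satisfies ‖v i‖² ≤ ⟪v i, x - z⟫
  have hvineq : ∀ i, ‖v i‖ ^ 2 ≤ ⟪v i, x - z⟫ := by
    intro i
    set c : ℝ := max 0 (f i x + ε) with hc
    have hcnn : 0 ≤ c := le_max_left _ _
    rcases eq_or_lt_of_le hcnn with h0 | hcpos
    · have : v i = 0 := by rw [hv i, ← hc, ← h0]; simp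
      simp [this]
    · have hfε : 0 < f i x + ε := by
        rcases max_cases 0 (f i x + ε) with ⟨h1, h2⟩ | ⟨h1, h2⟩
        · rw [hc, h1] at hcpos; exact absurd hcpos (lt_irrefl 0)
        · exact h2
      have hceq : c = f i x + ε := max_eq_right hfε.le
      have hu : u i ≠ 0 := hune i hfε
      have hun : (0:ℝ) < ‖u i‖ := norm_pos_iff.mpr hu
      have hinner : c ≤ ⟪u i, x - z⟫ := by
        have h1 := hsub i z
        have h2 : ⟪u i, z - x⟫ = - ⟪u i, x - z⟫ := by
          rw [← inner_neg_right]; congr 1; abel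
        have h3 := hz i
        rw [hceq]; linarith [h1, h2 ▸ h1]
      have hvi : v i = (c / ‖u i‖ ^ 2) • u i := by rw [hv i, ← hc]
      have hnv : ‖v i‖ ^ 2 = c ^ 2 / ‖u i‖ ^ 2 := by
        rw [hvi, norm_smul]
        rw [Real.norm_eq_abs, abs_of_nonneg (by positivity)]
        field_simp
      rw [hnv, hvi, real_inner_smul_left]
      have : ⟪u i, x - z⟫ ≥ c := hinner
      rw [div_mul_eq_mul_div, div_le_div_iff₀ (by positivity) (by positivity)]
      have h4 : c * c ≤ c * ⟪u i, x - z⟫ := mul_le_mul_of_nonneg_left hinner hcnn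
      nlinarith [mul_le_mul_of_nonneg_right h4 (sq_nonneg ‖u i‖)]
  have hwineq : S ≤ ⟪w, x - z⟫ := by
    rw [hw, real_inner_smul_left, sum_inner]
    have h1 : ∑ i, ‖v i‖ ^ 2 ≤ ∑ i, ⟪v i, x - z⟫ :=
      Finset.sum_le_sum fun i _ => hvineq i
    rw [hS]
    exact mul_le_mul_of_nonneg_left h1 (by positivity)
  have hmpos : (0:ℝ) < m := Nat.cast_pos.mpr hm
  have hwsq : ‖w‖ ^ 2 ≤ S := by
    have h2 : ‖∑ i, v i‖ ≤ ∑ i, ‖v i‖ := norm_sum_le _ _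
    have h3 : (∑ i, ‖v i‖) ^ 2 ≤ (m:ℝ) * ∑ i, ‖v i‖ ^ 2 := by
      have := sq_sum_le_card_mul_sum_sq (s := Finset.univ) (f := fun i => ‖v i‖)
      simpa using this
    have h1 : ‖∑ i, v i‖ ^ 2 ≤ (m:ℝ) * ∑ i, ‖v i‖ ^ 2 := by
      calc ‖∑ i, v i‖ ^ 2 ≤ (∑ i, ‖v i‖) ^ 2 := by
            apply pow_le_pow_left₀ (norm_nonneg _) h2
        _ ≤ _ := h3
    rw [hw, norm_smul, mul_pow, Real.norm_eq_abs, abs_of_nonneg (by positivity), hS]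
    calc ((m:ℝ)⁻¹) ^ 2 * ‖∑ i, v i‖ ^ 2 ≤ ((m:ℝ)⁻¹) ^ 2 * ((m:ℝ) * ∑ i, ‖v i‖ ^ 2) := by
          exact mul_le_mul_of_nonneg_left h1 (by positivity)
      _ = (m:ℝ)⁻¹ * ∑ i, ‖v i‖ ^ 2 := by field_simp
  rcases eq_or_ne w 0 with hw0 | hwne
  · have h0 : S ≤ 0 := by
      have := hwineq; rw [hw0] at this; simpa using this
    have hSeq : S = 0 := le_antisymm h0 hSnn
    rw [hstep0 hw0, hSeq]
    simp
  · have hxn := hstep hwne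
    have hWpos : (0:ℝ) < ‖w‖ ^ 2 := by
      have := norm_pos_iff.mpr hwne
      positivity
    set W : ℝ := ‖w‖ ^ 2 with hWdef
    set P : ℝ := ⟪x - z, w⟫ with hPdef
    have hP : S ≤ P := by rw [hPdef, real_inner_comm]; exact hwineq
    have hrw : xnext - z = (x - z) - (S / W) • w := by
      rw [hxn]; abel
    have hexp : ‖(x - z) - (S / W) • w‖ ^ 2
        = ‖x - z‖ ^ 2 - 2 * ((S / W) * P) + (S / W) ^ 2 * W := by
      rw [norm_sub_sq_real, real_inner_smul_right, norm_smul, Real.norm_eq_abs,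
        mul_pow, sq_abs, hPdef]
    rw [hrw, hexp]
    have key : S * W + S ^ 2 ≤ 2 * S * P := by nlinarith
    have h5 : (S / W) ^ 2 * W + S = (S ^ 2 + S * W) / W := by field_simp
    have h6 : 2 * ((S / W) * P) = (2 * S * P) / W := by field_simp
    have h7 : (S ^ 2 + S * W) / W ≤ (2 * S * P) / W := by
      apply div_le_div_of_nonneg_right (by linarith) hWpos.le
    linarith [h5, h6, h7]

lemma norm_le_of_sq_le_sq {E : Type*} [NormedAddCommGroup E] {a b : E}
    (h : ‖a‖ ^ 2 ≤ ‖b‖ ^ 2) : ‖a‖ ≤ ‖b‖ := by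
  have := Real.sqrt_le_sqrt h
  rwa [Real.sqrt_sq (norm_nonneg _), Real.sqrt_sq (norm_nonneg _)] at this

set_option maxHeartbeats 2000000 in
theorem stmt_11 {n m : ℕ} (hm : 0 < m)
    (f : Fin m → EuclideanSpace ℝ (Fin n) → ℝ)
    (hconv : ∀ i, ConvexOn ℝ Set.univ (f i))
    (xhat : EuclideanSpace ℝ (Fin n)) (hslater : ∀ i, f i xhat < 0)
    (ε : ℕ → ℝ) (hεpos : ∀ k, 0 < ε k) (hεanti : StrictAnti ε)
    (hεlim : Tendsto ε atTop (nhds 0))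
    (x : ℕ → EuclideanSpace ℝ (Fin n))
    (u v : Fin m → ℕ → EuclideanSpace ℝ (Fin n))
    (w : ℕ → EuclideanSpace ℝ (Fin n))
    (hsub : ∀ i k, ∀ z, f i (x k) + ⟪u i k, z - x k⟫ ≤ f i z)
    (hune : ∀ i k, 0 < f i (x k) + ε k → u i k ≠ 0)
    (hv : ∀ i k, v i k = (max 0 (f i (x k) + ε k) / ‖u i k‖ ^ 2) • u i k)
    (hw : ∀ k, w k = (m : ℝ)⁻¹ • ∑ i, v i k)
    (hstep0 : ∀ k, w k = 0 → x (k + 1) = x k)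
    (hstep : ∀ k, w k ≠ 0 →
      x (k + 1) = x k - (((m : ℝ)⁻¹ * ∑ i, ‖v i k‖ ^ 2) / ‖w k‖ ^ 2) • w k)
    (hinfinite : ∀ k, ∃ i, 0 < f i (x k)) :
    ∃ xstar : EuclideanSpace ℝ (Fin n),
      (∀ i, f i xstar ≤ 0) ∧ Tendsto x atTop (nhds xstar) := by
  classical
  have hne : Nonempty (Fin m) := ⟨⟨0, hm⟩⟩
  set S : ℕ → ℝ := fun k => (m : ℝ)⁻¹ * ∑ i, ‖v i k‖ ^ 2 with hSdef
  have hSnn : ∀ k, 0 ≤ S k := by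
    intro k
    apply mul_nonneg (by positivity)
    exact Finset.sum_nonneg fun i _ => by positivity
  have fejer : ∀ k z, (∀ i, f i z + ε k ≤ 0) →
      ‖x (k + 1) - z‖ ^ 2 + S k ≤ ‖x k - z‖ ^ 2 := by
    intro k z hz
    exact paca_fejer_step hm f (x k) (x (k + 1)) (ε k) (fun i => u i k)
      (fun i => v i k) (w k) (fun i z' => hsub i k z') (fun i => hune i k)
      (fun i => hv i k) (hw k) (hstep0 k) (hstep k) z hz
  -- monotone decrease of distances to sufficiently feasible points
  have dec : ∀ (z : EuclideanSpace ℝ (Fin n)) (K' : ℕ), (∀ i, f i z + ε K' ≤ 0) →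
      ∀ a b, K' ≤ a → a ≤ b → ‖x b - z‖ ≤ ‖x a - z‖ := by
    intro z K' hz a b ha hab
    have hzk : ∀ k, K' ≤ k → ∀ i, f i z + ε k ≤ 0 := by
      intro k hk i
      have := hεanti.antitone hk
      linarith [hz i]
    induction b, hab using Nat.le_induction with
    | base => exact le_refl _
    | succ b hb ih =>
      refine le_trans ?_ ih
      apply norm_le_of_sq_le_sq
      have := fejer b z (hzk b (le_trans ha hb))
      linarith [hSnn b]
  have hcont : ∀ i, Continuous (f i) := by
    intro i
    have := (hconv i).continuousOn isOpen_univ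
    rwa [continuousOn_univ] at this
  -- Slater margin
  set δ0 : ℝ := Finset.univ.inf' Finset.univ_nonempty (fun i => -(f i xhat)) with hδ0def
  have hδ0 : 0 < δ0 := by
    rw [hδ0def, Finset.lt_inf'_iff]
    intro i _
    linarith [hslater i]
  have hδ0le : ∀ i, f i xhat ≤ -δ0 := by
    intro i
    have := Finset.inf'_le (fun i => -(f i xhat)) (Finset.mem_univ i)
    linarith
  obtain ⟨K, hK⟩ : ∃ K, ∀ k ≥ K, ε k < δ0 :=
    eventually_atTop.mp (hεlim.eventually (gt_mem_nhds hδ0))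
  have hxhatfeas : ∀ k, K ≤ k → ∀ i, f i xhat + ε k ≤ 0 := by
    intro k hk i
    linarith [hK k hk, hδ0le i]
  -- Step C : S → 0
  set A : ℕ → ℝ := fun k => ‖x (k + K) - xhat‖ ^ 2 with hAdef
  have hxkfeas : ∀ k : ℕ, ∀ i, f i xhat + ε (k + K) ≤ 0 := fun k =>
    hxhatfeas (k + K) (Nat.le_add_left K k)
  have hidx : ∀ k : ℕ, k + 1 + K = k + K + 1 := fun k => by omega
  have hAanti : Antitone A := by
    apply antitone_nat_of_succ_le
    intro k
    have h1 := fejer (k + K) xhat (hxkfeas k)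
    simp only [hAdef, hidx k]
    linarith [hSnn (k + K)]
  have hAbdd : BddBelow (Set.range A) := by
    refine ⟨0, ?_⟩
    rintro _ ⟨k, rfl⟩
    positivity
  have hAlim := tendsto_atTop_ciInf hAanti hAbdd
  have hA1 : Tendsto (fun k => A (k + 1)) atTop (nhds (⨅ k, A k)) :=
    hAlim.comp (tendsto_add_atTop_nat 1)
  have hdiff : Tendsto (fun k => A k - A (k + 1)) atTop (nhds 0) := by
    have := hAlim.sub hA1
    simpa using this
  have hS1 : Tendsto (fun k => S (k + K)) atTop (nhds 0) := by
    apply tendsto_of_tendsto_of_tendsto_of_le_of_le tendsto_const_nhds hdiff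
    · intro k; exact hSnn _
    · intro k
      have h1 := fejer (k + K) xhat (hxkfeas k)
      simp only [hAdef, hidx k]
      linarith
  have hS0 : Tendsto S atTop (nhds 0) := (tendsto_add_atTop_iff_nat K).mp hS1
  -- boundedness
  set R : ℝ := ‖x K - xhat‖ with hRdef
  have hRnn : 0 ≤ R := norm_nonneg _
  have hball : ∀ k, K ≤ k → ‖x k - xhat‖ ≤ R := fun k hk =>
    dec xhat K (hxhatfeas K le_rfl) K k le_rfl hk
  -- subgradient bounds
  have hLex : ∀ i, ∃ L : ℝ, 0 ≤ L ∧ ∀ k, K ≤ k → u i k ≠ 0 → ‖u i k‖ ≤ L := by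
    intro i
    have hcomp : IsCompact (Metric.closedBall xhat (R + 1)) := isCompact_closedBall _ _
    have hnb : (Metric.closedBall xhat (R + 1)).Nonempty :=
      ⟨xhat, Metric.mem_closedBall_self (by linarith)⟩
    obtain ⟨p, hpmem, hp⟩ := hcomp.exists_isMaxOn hnb ((hcont i).continuousOn)
    obtain ⟨q, hqmem, hq⟩ := hcomp.exists_isMinOn hnb ((hcont i).continuousOn)
    rw [isMaxOn_iff] at hp
    rw [isMinOn_iff] at hq
    refine ⟨f i p - f i q, by linarith [hq p hpmem], ?_⟩
    intro k hk hu
    have hun : (0:ℝ) < ‖u i k‖ := norm_pos_iff.mpr hu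
    set z : EuclideanSpace ℝ (Fin n) := x k + ‖u i k‖⁻¹ • u i k with hzdef
    have hxkmem : x k ∈ Metric.closedBall xhat (R + 1) := by
      rw [Metric.mem_closedBall, dist_eq_norm]
      linarith [hball k hk]
    have hzmem : z ∈ Metric.closedBall xhat (R + 1) := by
      rw [Metric.mem_closedBall, dist_eq_norm]
      have h1 : z - xhat = (x k - xhat) + ‖u i k‖⁻¹ • u i k := by rw [hzdef]; abel
      have h2 : ‖(‖u i k‖⁻¹ • u i k)‖ = 1 := by
        rw [norm_smul, Real.norm_eq_abs, abs_of_nonneg (by positivity),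
          inv_mul_cancel₀ hun.ne']
      rw [h1]
      calc ‖(x k - xhat) + ‖u i k‖⁻¹ • u i k‖ ≤ ‖x k - xhat‖ + ‖(‖u i k‖⁻¹ • u i k)‖ :=
            norm_add_le _ _
        _ ≤ R + 1 := by rw [h2]; linarith [hball k hk]
    have hinner : ⟪u i k, z - x k⟫ = ‖u i k‖ := by
      have h1 : z - x k = ‖u i k‖⁻¹ • u i k := by rw [hzdef]; abel
      rw [h1, real_inner_smul_right, real_inner_self_eq_norm_sq]
      field_simp
    have h3 := hsub i k z
    rw [hinner] at h3
    linarith [hp z hzmem, hq (x k) hxkmem]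
  choose L hLnn hL using hLex
  -- the residuals tend to 0
  have hc0 : ∀ i, Tendsto (fun k => max 0 (f i (x k) + ε k)) atTop (nhds 0) := by
    intro i
    have hbound : ∀ k, K ≤ k →
        max 0 (f i (x k) + ε k) ≤ Real.sqrt ((L i) ^ 2 * ((m:ℝ) * S k)) := by
      intro k hk
      rcases le_or_gt (f i (x k) + ε k) 0 with h0 | hfε
      · rw [max_eq_left h0]
        exact Real.sqrt_nonneg _
      · have hceq : max 0 (f i (x k) + ε k) = f i (x k) + ε k := max_eq_right hfε.le
        have hu := hune i k hfε
        have hun : (0:ℝ) < ‖u i k‖ := norm_pos_iff.mpr hu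
        have hvn : ‖v i k‖ = (f i (x k) + ε k) / ‖u i k‖ := by
          rw [hv i k, hceq, norm_smul, Real.norm_eq_abs, abs_of_nonneg (by positivity)]
          field_simp
        have hcu : f i (x k) + ε k = ‖v i k‖ * ‖u i k‖ := by rw [hvn]; field_simp
        have h1 : ‖u i k‖ ≤ L i := hL i k hk hu
        have hsum : ‖v i k‖ ^ 2 ≤ (m:ℝ) * S k := by
          have h2 : (m:ℝ) * S k = ∑ j, ‖v j k‖ ^ 2 := by
            rw [hSdef]
            have hm0 : ((m:ℝ)) ≠ 0 := Nat.cast_ne_zero.mpr hm.ne'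
            field_simp
          rw [h2]
          exact Finset.single_le_sum (f := fun j => ‖v j k‖ ^ 2) (fun j _ => by positivity)
            (Finset.mem_univ i)
        have hu2 : ‖u i k‖ ^ 2 ≤ (L i) ^ 2 := by nlinarith
        have hc2 : (f i (x k) + ε k) ^ 2 ≤ (L i) ^ 2 * ((m:ℝ) * S k) := by
          rw [hcu]
          calc (‖v i k‖ * ‖u i k‖) ^ 2 = ‖u i k‖ ^ 2 * ‖v i k‖ ^ 2 := by ring
            _ ≤ (L i) ^ 2 * ((m:ℝ) * S k) := by
                apply mul_le_mul hu2 hsum (by positivity) (by positivity)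
        rw [hceq]
        calc f i (x k) + ε k = Real.sqrt ((f i (x k) + ε k) ^ 2) :=
              (Real.sqrt_sq hfε.le).symm
          _ ≤ _ := Real.sqrt_le_sqrt hc2
    have hrhs : Tendsto (fun k => Real.sqrt ((L i) ^ 2 * ((m:ℝ) * S k))) atTop (nhds 0) := by
      have h1 : Tendsto (fun k => (L i) ^ 2 * ((m:ℝ) * S k)) atTop (nhds 0) := by
        have h2 := hS0.const_mul ((L i) ^ 2 * (m:ℝ))
        simp only [mul_zero] at h2
        convert h2 using 2 with k
        ring
      have h3 := (Real.continuous_sqrt.tendsto 0).comp h1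
      simpa [Function.comp_def] using h3
    apply tendsto_of_tendsto_of_tendsto_of_le_of_le' tendsto_const_nhds hrhs
    · exact Eventually.of_forall fun k => le_max_left _ _
    · exact eventually_atTop.mpr ⟨K, hbound⟩
  -- cluster point
  have hmem : ∀ j : ℕ, x (j + K) ∈ Metric.closedBall xhat R := by
    intro j
    rw [Metric.mem_closedBall, dist_comm, dist_eq_norm]
    exact (norm_sub_rev _ _).le.trans_eq' (by rw [norm_sub_rev]) |>.trans (hball (j + K) (Nat.le_add_left K j))
  obtain ⟨xstar, _, φ, hφmono, hφtend⟩ := (isCompact_closedBall xhat R).tendsto_subseq hmem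
  set ψ : ℕ → ℕ := fun j => φ j + K with hψdef
  have hψge : ∀ j, j ≤ ψ j := fun j => le_trans hφmono.le_apply (Nat.le_add_right _ K)
  have hψtend : Tendsto ψ atTop atTop := tendsto_atTop_mono hψge tendsto_id
  have hxψ : Tendsto (fun j => x (ψ j)) atTop (nhds xstar) := hφtend
  have hfstar : ∀ i, f i xstar ≤ 0 := by
    intro i
    have h1 : Tendsto (fun j => f i (x (ψ j))) atTop (nhds (f i xstar)) :=
      ((hcont i).tendsto xstar).comp hxψ
    have h2 : Tendsto (fun j => max 0 (f i (x (ψ j)) + ε (ψ j))) atTop (nhds 0) :=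
      (hc0 i).comp hψtend
    refine le_of_tendsto_of_tendsto' h1 h2 fun j => ?_
    calc f i (x (ψ j)) ≤ f i (x (ψ j)) + ε (ψ j) := by linarith [hεpos (ψ j)]
      _ ≤ _ := le_max_right _ _
  refine ⟨xstar, hfstar, ?_⟩
  rw [Metric.tendsto_atTop]
  intro δ hδ
  set D0 : ℝ := ‖xhat - xstar‖ with hD0def
  have hD0nn : 0 ≤ D0 := norm_nonneg _
  set t : ℝ := min 1 (δ / (3 * (D0 + 1))) with htdef
  have ht0 : 0 < t := lt_min one_pos (by positivity)
  have ht1 : t ≤ 1 := min_le_left _ _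
  have htD0 : t * D0 < δ / 3 := by
    have h1 : t * (D0 + 1) ≤ (δ / (3 * (D0 + 1))) * (D0 + 1) :=
      mul_le_mul_of_nonneg_right (min_le_right _ _) (by linarith)
    have h2 : (δ / (3 * (D0 + 1))) * (D0 + 1) = δ / 3 := by
      field_simp
    nlinarith
  set z : EuclideanSpace ℝ (Fin n) := xstar + t • (xhat - xstar) with hzdef
  have hzeq : z = (1 - t) • xstar + t • xhat := by
    rw [hzdef, smul_sub, sub_smul, one_smul]
    abel
  have hfz : ∀ i, f i z ≤ -(t * δ0) := by
    intro i
    have hcvx := (hconv i).2 (Set.mem_univ xstar) (Set.mem_univ xhat)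
      (by linarith : (0:ℝ) ≤ 1 - t) ht0.le (by ring)
    rw [← hzeq] at hcvx
    have h3 : (1 - t) * f i xstar ≤ 0 :=
      mul_nonpos_of_nonneg_of_nonpos (by linarith) (hfstar i)
    have h4 : t * f i xhat ≤ t * (-δ0) := mul_le_mul_of_nonneg_left (hδ0le i) ht0.le
    have h5 : t * (-δ0) = -(t * δ0) := by ring
    calc f i z ≤ (1 - t) • f i xstar + t • f i xhat := hcvx
      _ = (1 - t) * f i xstar + t * f i xhat := by simp [smul_eq_mul]
      _ ≤ -(t * δ0) := by linarith
  obtain ⟨K', hK'⟩ : ∃ K', ∀ k ≥ K', ε k < t * δ0 :=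
    eventually_atTop.mp (hεlim.eventually (gt_mem_nhds (by positivity)))
  have hzfeas : ∀ i, f i z + ε K' ≤ 0 := fun i => by linarith [hK' K' le_rfl, hfz i]
  have hzx : ‖z - xstar‖ = t * D0 := by
    have h1 : z - xstar = t • (xhat - xstar) := by rw [hzdef]; abel
    rw [h1, norm_smul, Real.norm_eq_abs, abs_of_nonneg ht0.le, hD0def]
  obtain ⟨N1, hN1⟩ := eventually_atTop.mp (hψtend.eventually (eventually_ge_atTop K'))
  obtain ⟨N2, hN2⟩ := Metric.tendsto_atTop.mp hxψ (δ / 3) (by linarith)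
  set j0 := max N1 N2 with hj0def
  refine ⟨ψ j0, fun k hk => ?_⟩
  have hK'ψ : K' ≤ ψ j0 := hN1 j0 (le_max_left _ _)
  have hd1 : ‖x k - z‖ ≤ ‖x (ψ j0) - z‖ := dec z K' hzfeas (ψ j0) k hK'ψ hk
  have hd2 : ‖x (ψ j0) - z‖ ≤ dist (x (ψ j0)) xstar + ‖xstar - z‖ := by
    calc ‖x (ψ j0) - z‖ = dist (x (ψ j0)) z := (dist_eq_norm _ _).symm
      _ ≤ dist (x (ψ j0)) xstar + dist xstar z := dist_triangle _ _ _
      _ = dist (x (ψ j0)) xstar + ‖xstar - z‖ := by rw [dist_eq_norm xstar z]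
  have hxsz : ‖xstar - z‖ = t * D0 := by rw [norm_sub_rev]; exact hzx
  have hN2' := hN2 j0 (le_max_right _ _)
  calc dist (x k) xstar ≤ dist (x k) z + dist z xstar := dist_triangle _ _ _
    _ = ‖x k - z‖ + ‖z - xstar‖ := by rw [dist_eq_norm, dist_eq_norm]
    _ ≤ (dist (x (ψ j0)) xstar + ‖xstar - z‖) + ‖z - xstar‖ := by linarith
    _ < δ / 3 + t * D0 + t * D0 := by rw [hxsz, hzx]; linarith
    _ < δ := by linarith
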